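/- In the strong protection model, the map γ ↦ 1 − (1 − p⁺)·exp(−λ·q⁺·h(γ)) is nonincreasing on [0,1]; equivalently, for γ ∈ [0,1) the ratio h(γ)/(1 − γ) is nonincreasing in γ. (This ratio equals the loss probability p^{N,γ} of an unprotected agent, so the incentive threshold c^γ = p^{N,γ}·ℓ for investing in self-protection is nonincreasing in the fraction γ of protected agents.) -/

import Mathlib

open Set

/-- Chord inequality from convexity of `exp`:
`y * exp(-(a*x)) ≤ x * exp(-(a*y)) + (y - x)` for `0 ≤ x < y`. -/
lemma chord_aux (a x y : ℝ) (hx : 0 ≤ x) (hxy : x < y) :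
    y * Real.exp (-(a * x)) ≤ x * Real.exp (-(a * y)) + (y - x) := by
  have hy : 0 < y := lt_of_le_of_lt hx hxy
  have hw1 : (0:ℝ) ≤ x / y := by positivity
  have hw2 : (0:ℝ) ≤ (y - x) / y := by
    have : (0:ℝ) ≤ y - x := by linarith
    positivity
  have hw3 : x / y + (y - x) / y = 1 := by field_simp; ring
  have hconv : Real.exp (x / y * -(a * y) + (y - x) / y * 0) ≤
      x / y * Real.exp (-(a * y)) + (y - x) / y * Real.exp 0 :=
    convexOn_exp.2 (Set.mem_univ _) (Set.mem_univ _) hw1 hw2 hw3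
  have harg : x / y * -(a * y) + (y - x) / y * 0 = -(a * x) := by
    field_simp; ring
  rw [harg, Real.exp_zero, mul_one] at hconv
  have h2 : y * Real.exp (-(a * x)) ≤
      y * (x / y * Real.exp (-(a * y)) + (y - x) / y) :=
    mul_le_mul_of_nonneg_left hconv hy.le
  have h3 : y * (x / y * Real.exp (-(a * y)) + (y - x) / y) =
      x * Real.exp (-(a * y)) + (y - x) := by field_simp
  linarith [h2, h3.le, h3.ge]

/-- Strict monotonicity of `x / F(x)` where `F(x) = 1 - b * exp(-(a*x))`. -/
lemma key_aux (a b x y : ℝ) (hb0 : 0 < b) (hb1 : b < 1)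
    (hx : 0 ≤ x) (hxy : x < y) :
    x * (1 - b * Real.exp (-(a * y))) < y * (1 - b * Real.exp (-(a * x))) := by
  have hc := chord_aux a x y hx hxy
  set eu := Real.exp (-(a * x)) with heu
  set ev := Real.exp (-(a * y)) with hev
  -- goal reduces to: b * (y * eu - x * ev) < y - x, given y * eu - x * ev ≤ y - x
  rcases le_or_gt (y * eu - x * ev) 0 with h0 | h0
  · nlinarith [mul_nonpos_of_nonneg_of_nonpos hb0.le h0]
  · nlinarith [mul_lt_mul_of_pos_right hb1 h0]

/-- In the strong protection model (`λ > 0`, `q⁺ ∈ (0,1]`, `p⁺ ∈ (0,1)`,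
`p⁻ = q⁻ = 0`), where `h(γ)` is the unique solution in `[0,1]` of
`h = (1 − γ)·(1 − (1 − p⁺)·exp(−λ·q⁺·h))`, the map
`γ ↦ 1 − (1 − p⁺)·exp(−λ·q⁺·h(γ))` is nonincreasing on `[0,1]`; equivalently, for `γ ∈ [0,1)`
the ratio `h(γ)/(1 − γ)` is nonincreasing in `γ`. -/
theorem stmt_9 (lam qp pp : ℝ) (hlam : 0 < lam) (hqp : qp ∈ Ioc (0:ℝ) 1)
    (hpp : pp ∈ Ioo (0:ℝ) 1) (h : ℝ → ℝ)
    (hfix : ∀ γ ∈ Icc (0:ℝ) 1, h γ ∈ Icc (0:ℝ) 1 ∧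
      h γ = (1 - γ) * (1 - (1 - pp) * Real.exp (-(lam * qp * h γ)))) :
    (∀ u ∈ Icc (0:ℝ) 1, ∀ v ∈ Icc (0:ℝ) 1, u ≤ v →
      1 - (1 - pp) * Real.exp (-(lam * qp * h v)) ≤
        1 - (1 - pp) * Real.exp (-(lam * qp * h u))) ∧
    (∀ u ∈ Ico (0:ℝ) 1, ∀ v ∈ Ico (0:ℝ) 1, u ≤ v →
      h v / (1 - v) ≤ h u / (1 - u)) := by
  have ha : 0 < lam * qp := mul_pos hlam hqp.1
  have hb0 : 0 < 1 - pp := by linarith [hpp.2]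
  have hb1 : 1 - pp < 1 := by linarith [hpp.1]
  -- positivity of F(h γ)
  have hFpos : ∀ γ ∈ Icc (0:ℝ) 1,
      0 < 1 - (1 - pp) * Real.exp (-(lam * qp * h γ)) := by
    intro γ hγ
    have hh := (hfix γ hγ).1
    have hle : Real.exp (-(lam * qp * h γ)) ≤ 1 := by
      calc Real.exp (-(lam * qp * h γ)) ≤ Real.exp 0 :=
            Real.exp_le_exp.mpr (by nlinarith [hh.1])
        _ = 1 := Real.exp_zero
    nlinarith [Real.exp_pos (-(lam * qp * h γ)), hpp.1]
  -- h is nonincreasing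
  have hmono : ∀ u ∈ Icc (0:ℝ) 1, ∀ v ∈ Icc (0:ℝ) 1, u ≤ v → h v ≤ h u := by
    intro u hu v hv huv
    by_contra hcon
    push_neg at hcon
    have hx : 0 ≤ h u := (hfix u hu).1.1
    have hkey := key_aux (lam * qp) (1 - pp) (h u) (h v) hb0 hb1 hx hcon
    set Fu := 1 - (1 - pp) * Real.exp (-(lam * qp * h u)) with hFudef
    set Fv := 1 - (1 - pp) * Real.exp (-(lam * qp * h v)) with hFvdef
    have e1 : h u = (1 - u) * Fu := (hfix u hu).2
    have e2 : h v = (1 - v) * Fv := (hfix v hv).2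
    rw [e1, e2] at hkey
    have hFu : 0 < Fu := hFpos u hu
    have hFv : 0 < Fv := hFpos v hv
    -- hkey : ((1-u)*Fu) * Fv < ((1-v)*Fv) * Fu, with Fu, Fv > 0 forces 1-u < 1-v
    nlinarith [hkey, mul_pos hFu hFv, huv]
  constructor
  · intro u hu v hv huv
    have hvu := hmono u hu v hv huv
    have hexp : Real.exp (-(lam * qp * h u)) ≤ Real.exp (-(lam * qp * h v)) :=
      Real.exp_le_exp.mpr (by nlinarith)
    nlinarith [mul_le_mul_of_nonneg_left hexp hb0.le]
  · intro u hu v hv huv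
    have hu' : u ∈ Icc (0:ℝ) 1 := ⟨hu.1, hu.2.le⟩
    have hv' : v ∈ Icc (0:ℝ) 1 := ⟨hv.1, hv.2.le⟩
    have h1u : (1 : ℝ) - u ≠ 0 := by have := hu.2; intro hz; linarith
    have h1v : (1 : ℝ) - v ≠ 0 := by have := hv.2; intro hz; linarith
    set Fu := 1 - (1 - pp) * Real.exp (-(lam * qp * h u)) with hFudef
    set Fv := 1 - (1 - pp) * Real.exp (-(lam * qp * h v)) with hFvdef
    have e1 : h u = (1 - u) * Fu := (hfix u hu').2
    have e2 : h v = (1 - v) * Fv := (hfix v hv').2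
    have r1 : h u / (1 - u) = Fu := by rw [e1, mul_div_cancel_left₀ _ h1u]
    have r2 : h v / (1 - v) = Fv := by rw [e2, mul_div_cancel_left₀ _ h1v]
    rw [r1, r2, hFudef, hFvdef]
    have hvu := hmono u hu' v hv' huv
    have hexp : Real.exp (-(lam * qp * h u)) ≤ Real.exp (-(lam * qp * h v)) :=
      Real.exp_le_exp.mpr (by nlinarith)
    nlinarith [mul_le_mul_of_nonneg_left hexp hb0.le]
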